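/- Let n be an odd positive integer and q = 2^n. For every a ∈ F_q with Tr(a) = 1 and a ≠ 1, the set {y ∈ F_q : y⁴ + (a+1)y² + (a+1)y = 0} has exactly 2 elements. -/

import Mathlib

set_option linter.unusedSectionVars false
set_option maxHeartbeats 1000000



section aux

variable {F : Type*} [Field F] [Fintype F]

lemma my_char2 (n : ℕ) (hn0 : 0 < n) (hF : Fintype.card F = 2 ^ n) : CharP F 2 := by
  obtain ⟨p, hp⟩ := CharP.exists F
  obtain ⟨m, hpp, hcard⟩ := FiniteField.card F p
  have h2 : p = 2 := by
    have hdvd : p ∣ 2 ^ n := by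
      rw [← hF, hcard]
      exact dvd_pow_self p m.pos.ne'
    have := (Nat.Prime.dvd_of_dvd_pow hpp hdvd)
    exact (Nat.prime_dvd_prime_iff_eq hpp Nat.prime_two).mp this
  rwa [h2] at hp

end aux

section aux

variable {F : Type*} [Field F] [Fintype F] [CharP F 2]
variable (n : ℕ) (hF : Fintype.card F = 2 ^ n) (Tr : F → F)
  (hTr : ∀ x : F, Tr x = ∑ i ∈ Finset.range n, x ^ 2 ^ i)

include hTr in
lemma my_trAdd (x y : F) : Tr (x + y) = Tr x + Tr y := by
  simp only [hTr, add_pow_char_pow, Finset.sum_add_distrib]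

include hF in
lemma my_pow_card (x : F) : x ^ 2 ^ n = x := by rw [← hF]; exact FiniteField.pow_card x

include hF hTr in
lemma my_trSq (x : F) : Tr (x ^ 2) = Tr x := by
  have key : ∀ i : ℕ, (x ^ 2) ^ 2 ^ i = x ^ 2 ^ (i + 1) := by
    intro i; rw [← pow_mul, ← pow_succ']
  have h1 : Tr (x ^ 2) + x ^ 2 ^ 0 = Tr x + x ^ 2 ^ n := by
    rw [hTr, hTr]
    simp only [key]
    rw [← Finset.sum_range_succ' (fun i => x ^ 2 ^ i) n, Finset.sum_range_succ]
  rw [my_pow_card n hF, pow_zero, pow_one] at h1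
  exact add_right_cancel h1

include hF hTr in
lemma my_trSq' (x : F) : Tr x ^ 2 = Tr x := by
  rw [hTr, CharTwo.sum_sq]
  have : ∀ i ∈ Finset.range n, (x ^ 2 ^ i) ^ 2 = (x ^ 2) ^ 2 ^ i := by
    intro i _; rw [← pow_mul, ← pow_mul, mul_comm]
  rw [Finset.sum_congr rfl this, ← hTr, my_trSq n hF Tr hTr]; exact hTr x

include hF hTr in
lemma my_trIdem (x : F) : Tr x = 0 ∨ Tr x = 1 := by
  have h := my_trSq' n hF Tr hTr x
  have : Tr x * (Tr x - 1) = 0 := by linear_combination h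
  rcases mul_eq_zero.mp this with h' | h'
  · exact Or.inl h'
  · exact Or.inr (by linear_combination h')

include hTr in
lemma my_trOne (hn : Odd n) : Tr (1 : F) = 1 := by
  obtain ⟨k, hk⟩ := hn
  rw [hTr]
  simp only [one_pow, Finset.sum_const, Finset.card_range, nsmul_eq_mul, mul_one, hk]
  push_cast
  rw [CharTwo.two_eq_zero]
  ring

include hF hTr in
lemma my_hilb' (z : F) : Tr (z ^ 2 + z) = 0 := by
  rw [my_trAdd n Tr hTr, my_trSq n hF Tr hTr, CharTwo.add_self_eq_zero]

end aux

section aux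
open Polynomial

variable {F : Type*} [Field F] [Fintype F] [CharP F 2]
variable (n : ℕ) (hn : Odd n) (hF : Fintype.card F = 2 ^ n)

lemma my_add_eq_zero {x y : F} (h : x + y = 0) : x = y := by
  rw [← CharTwo.neg_eq (R := F) y]
  exact eq_neg_of_add_eq_zero_left h

lemma my_sqrt (c : F) : ∃ s : F, s ^ 2 = c := by
  have hinj : Function.Injective (fun x : F => x ^ 2) := by
    intro x y h
    simp only at h
    have h0 : (x + y) ^ 2 = 0 := by rw [CharTwo.add_sq, h, CharTwo.add_self_eq_zero]
    exact my_add_eq_zero (pow_eq_zero_iff (n := 2) (by norm_num) |>.mp h0)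
  exact Finite.surjective_of_injective hinj c

include hn hF in
lemma my_cbrt (c : F) : ∃ u : F, u ^ 3 = c := by
  have hcop : ¬ (3 ∣ Fintype.card F - 1) := by
    rw [hF]
    obtain ⟨k, hk⟩ := hn
    have h4 : ∀ m : ℕ, 4 ^ m % 3 = 1 := by
      intro m; induction m with
      | zero => rfl
      | succ l ih => rw [pow_succ]; omega
    have h2n : 2 ^ n % 3 = 2 := by
      have : 2 ^ n = 2 * 4 ^ k := by
        rw [hk, pow_add, pow_mul]; norm_num [mul_comm]
      rw [this]; have := h4 k; omega
    have h2 : 1 ≤ 2 ^ n := Nat.one_le_two_pow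
    omega
  have hinj : Function.Injective (fun x : F => x ^ 3) := by
    intro x y h
    simp only at h
    by_cases hy : y = 0
    · subst hy
      exact (by simpa using h : x = 0)
    by_cases hx : x = 0
    · subst hx
      exact ((by simpa using h.symm : y = 0)).symm
    set t : Fˣ := Units.mk0 x hx * (Units.mk0 y hy)⁻¹ with ht
    have ht3 : t ^ 3 = 1 := by
      ext
      push_cast [ht]
      field_simp
      rw [Units.val_mk0, Units.val_mk0, h, div_self (pow_ne_zero 3 hy)]
    by_contra hne
    have htne : t ≠ 1 := by
      intro h1
      apply hne
      have := congrArg (fun u : Fˣ => (u : F)) h1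
      push_cast [ht] at this
      field_simp at this
      rw [Units.val_mk0, Units.val_mk0, div_eq_one_iff_eq hy] at this
      exact this
    have hord : orderOf t = 3 := by
      rcases (Nat.dvd_prime Nat.prime_three).mp (orderOf_dvd_of_pow_eq_one ht3) with h | h
      · exact absurd (orderOf_eq_one_iff.mp h) htne
      · exact h
    have hdd := orderOf_dvd_natCard t
    rw [hord, Nat.card_units, Nat.card_eq_fintype_card] at hdd
    exact hcop hdd
  exact Finite.surjective_of_injective hinj c

end aux

section aux
open Polynomial Finset

variable {F : Type*} [Field F] [Fintype F] [CharP F 2]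
variable (n : ℕ) (hn0 : 0 < n) (hF : Fintype.card F = 2 ^ n) (Tr : F → F)
  (hTr : ∀ x : F, Tr x = ∑ i ∈ Finset.range n, x ^ 2 ^ i)

include hn0 hF hTr in
lemma my_hilb (c : F) (hc : Tr c = 0) : ∃ w : F, w ^ 2 + w = c := by
  classical
  set P : F[X] := ∑ i ∈ Finset.range n, Polynomial.X ^ (2 ^ i) with hP
  have hPeval : ∀ x : F, P.eval x = Tr x := by
    intro x
    rw [hP, hTr, Polynomial.eval_finset_sum]
    simp
  have hPne : P ≠ 0 := by
    intro h0
    have hco : P.coeff (2 ^ (n - 1)) = 1 := by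
      rw [hP]
      rw [Polynomial.finset_sum_coeff]
      simp only [Polynomial.coeff_X_pow]
      rw [Finset.sum_eq_single (n - 1)]
      · simp
      · intro i hi hne
        have : ¬ (2 ^ (n-1) = 2 ^ i) := fun h =>
          hne (Nat.pow_right_injective (le_refl 2) h).symm
        simp [this]
      · intro h; exact absurd (Finset.mem_range.mpr (by omega)) h
    rw [h0] at hco
    simp at hco
  have hPdeg : P.natDegree ≤ 2 ^ (n - 1) := by
    apply Polynomial.natDegree_sum_le_of_forall_le
    intro i hi
    rw [Polynomial.natDegree_X_pow]
    exact Nat.pow_le_pow_right (by norm_num) (by have := Finset.mem_range.mp hi; omega)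
  -- kernel of Tr as a finset
  set K : Finset F := Finset.univ.filter (fun x => Tr x = 0) with hK
  have hKcard : K.card ≤ 2 ^ (n - 1) := by
    have hsub : K ⊆ P.roots.toFinset := by
      intro x hx
      rw [Multiset.mem_toFinset, Polynomial.mem_roots hPne, Polynomial.IsRoot, hPeval]
      exact (Finset.mem_filter.mp hx).2
    calc K.card ≤ P.roots.toFinset.card := Finset.card_le_card hsub
      _ ≤ Multiset.card P.roots := P.roots.toFinset_card_le
      _ ≤ P.natDegree := P.card_roots'
      _ ≤ 2 ^ (n - 1) := hPdeg
  -- image of w ↦ w^2+w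
  set f : F → F := fun w => w ^ 2 + w with hf
  set I : Finset F := Finset.univ.image f with hI
  have hIcard : 2 ^ (n - 1) ≤ I.card := by
    have hfib : ∀ c ∈ I, (Finset.univ.filter (fun w => f w = c)).card ≤ 2 := by
      intro c hc
      obtain ⟨w₀, _, hw₀⟩ := Finset.mem_image.mp hc
      have : (Finset.univ.filter (fun w => f w = c)) ⊆ {w₀, w₀ + 1} := by
        intro w hw
        have hwc : f w = c := (Finset.mem_filter.mp hw).2
        have hdiff : (w + w₀) ^ 2 + (w + w₀) = 0 := by
          have : f w = f w₀ := by rw [hwc, hw₀]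
          rw [hf] at this
          simp only at this
          have h2 : (2 : F) = 0 := CharTwo.two_eq_zero
          linear_combination this + (w * w₀ + w₀ ^ 2 + w₀) * h2
        have : (w + w₀) * ((w + w₀) + 1) = 0 := by linear_combination hdiff
        rcases mul_eq_zero.mp this with h | h
        · have : w = w₀ := my_add_eq_zero h
          simp [this]
        · have hww : w + (w₀ + 1) = 0 := by linear_combination h
          have : w = w₀ + 1 := my_add_eq_zero hww
          simp [this]
      calc (Finset.univ.filter (fun w => f w = c)).card ≤ ({w₀, w₀+1} : Finset F).card :=
            Finset.card_le_card this
        _ ≤ 2 := Finset.card_insert_le _ _ |>.trans (by simp)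
    have hcount : Fintype.card F = ∑ c ∈ I, (Finset.univ.filter (fun w => f w = c)).card := by
      rw [← Finset.card_univ]
      exact Finset.card_eq_sum_card_fiberwise (fun x _ => Finset.mem_image_of_mem f (Finset.mem_univ x))
    have : (2:ℕ) ^ n ≤ 2 * I.card := by
      rw [← hF, hcount]
      calc ∑ c ∈ I, (Finset.univ.filter (fun w => f w = c)).card ≤ ∑ _c ∈ I, 2 :=
            Finset.sum_le_sum hfib
        _ = 2 * I.card := by rw [Finset.sum_const, smul_eq_mul, mul_comm]
    have h2n : (2:ℕ) ^ n = 2 * 2 ^ (n - 1) := by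
      conv_lhs => rw [show n = (n-1) + 1 by omega]
      ring
    omega
  -- image ⊆ kernel
  have hsub : I ⊆ K := by
    intro x hx
    obtain ⟨w, _, hw⟩ := Finset.mem_image.mp hx
    rw [hK, Finset.mem_filter]
    exact ⟨Finset.mem_univ x, by rw [← hw]; exact my_hilb' n hF Tr hTr w⟩
  have heq : I = K := Finset.eq_of_subset_of_card_le hsub (le_trans hKcard hIcard)
  have hcK : c ∈ K := Finset.mem_filter.mpr ⟨Finset.mem_univ c, hc⟩
  rw [← heq] at hcK
  obtain ⟨w, _, hw⟩ := Finset.mem_image.mp hcK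
  exact ⟨w, hw⟩

end aux
set_option maxHeartbeats 1000000

theorem quartic_two_solutions
    (n : ℕ) (hn : Odd n) (hn0 : 0 < n)
    {F : Type*} [Field F] [Fintype F] (hF : Fintype.card F = 2 ^ n)
    (Tr : F → F) (hTr : ∀ x : F, Tr x = ∑ i ∈ Finset.range n, x ^ 2 ^ i) :
    ∀ a : F, Tr a = 1 → a ≠ 1 →
      ({y : F | y ^ 4 + (a + 1) * y ^ 2 + (a + 1) * y = 0}).ncard = 2 := by
  intro a ha ha1
  haveI hch : CharP F 2 := my_char2 n hn0 hF
  have h2 : (2 : F) = 0 := CharTwo.two_eq_zero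
  have trOne : Tr (1 : F) = 1 := my_trOne n Tr hTr hn
  have trAdd := my_trAdd n Tr hTr
  have trSq := my_trSq n hF Tr hTr
  have hilb' := my_hilb' n hF Tr hTr
  have hA : Tr (a + 1) = 0 := by
    rw [trAdd, ha, trOne]; linear_combination h2
  have ha1' : a + 1 ≠ 0 := by
    intro h; exact ha1 (by linear_combination h - h2)
  -- existence of a nonzero root of the cubic
  obtain ⟨w, hw⟩ := my_hilb n hn0 hF Tr hTr (a + 1) hA
  obtain ⟨s, hs⟩ := my_sqrt (a + 1)
  have hs0 : s ≠ 0 := by intro h; apply ha1'; rw [← hs, h]; ring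
  have hw0 : w ≠ 0 := by intro h; apply ha1'; rw [← hw, h]; ring
  obtain ⟨u, hu⟩ := my_cbrt n hn hF (w / s)
  have hu0 : u ≠ 0 := by
    intro h; rw [h] at hu
    have : w = 0 := by field_simp at hu; simpa using hu.symm
    exact hw0 this
  have e1 : u ^ 3 * s = w := by
    field_simp at hu; linear_combination hu
  have hw' : w ^ 2 + w = s ^ 2 := by rw [hs]; exact hw
  set y₀ : F := s * u + s / u with hy₀
  have hy₀ne : y₀ ≠ 0 := by
    intro h
    rw [hy₀] at h
    have hu1 : u = 1 := by
      have h1 : u ^ 2 + 1 = 0 := by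
        field_simp at h
        have hs' : s * (u ^ 2 + 1) = 0 := by linear_combination h
        rcases mul_eq_zero.mp hs' with h' | h'
        · exact absurd h' hs0
        · exact h'
      have h3 : (u + 1) ^ 2 = 0 := by linear_combination h1 + u * h2
      have := pow_eq_zero_iff (n := 2) (by norm_num) |>.mp h3
      exact my_add_eq_zero this
    rw [hu1] at e1
    have hws : w = s := by linear_combination -e1
    rw [hws] at hw'
    exact hs0 (by linear_combination hw')
  have hcube : y₀ ^ 3 + (a + 1) * y₀ + (a + 1) = 0 := by
    have key : (y₀ ^ 3 + (a + 1) * y₀ + (a + 1)) * u ^ 3 = 0 := by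
      rw [hy₀, ← hs]
      field_simp
      ring_nf
      linear_combination (s * (u ^ 3 * s + w) + s) * e1 + s * hw' +
        (s ^ 3 + 2 * s ^ 3 * u ^ 2 + 2 * s ^ 3 * u ^ 4) * h2
    rcases mul_eq_zero.mp key with h | h
    · exact h
    · exact absurd (pow_eq_zero_iff (n := 3) (by norm_num) |>.mp h) hu0
  -- uniqueness
  have huniq : ∀ r t : F, r ≠ 0 → t ≠ 0 → r ≠ t →
      r ^ 3 + (a + 1) * r + (a + 1) = 0 → t ^ 3 + (a + 1) * t + (a + 1) = 0 → False := by
    intro r t hr0 ht0 hrt hr ht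
    have hr1 : r + 1 ≠ 0 := by
      intro h
      have : r = 1 := my_add_eq_zero h
      rw [this] at hr
      exact one_ne_zero (by linear_combination hr - (a + 1) * h2 : (1 : F) = 0)
    have hq : t ^ 2 + r * t + r ^ 2 + (a + 1) = 0 := by
      have hfac : (t - r) * (t ^ 2 + r * t + r ^ 2 + (a + 1)) = 0 := by
        linear_combination ht - hr
      rcases mul_eq_zero.mp hfac with h | h
      · exact absurd (sub_eq_zero.mp h).symm hrt
      · exact h
    have hz : (t / r) ^ 2 + (t / r) = 1 / (r + 1) := by
      field_simp
      ring_nf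
      linear_combination (r + 1) * hq - hr - r ^ 2 * h2
    have htd : Tr (1 / (r + 1)) = 0 := by
      have := hilb' (t / r); rw [hz] at this; exact this
    have hsplit : a + 1 = (r ^ 2 + r + 1) + 1 / (r + 1) := by
      field_simp
      ring_nf
      linear_combination hr - (r ^ 3 + 1 + r + r ^ 2) * h2
    have : Tr (a + 1) = 1 := by
      rw [hsplit, trAdd, trAdd, trAdd, htd, trOne]
      have : Tr (r ^ 2) = Tr r := trSq r
      rw [this]
      ring_nf
      linear_combination Tr r * h2
    rw [hA] at this
    exact one_ne_zero this.symm
  -- conclude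
  have hset : {y : F | y ^ 4 + (a + 1) * y ^ 2 + (a + 1) * y = 0} = {0, y₀} := by
    ext y
    simp only [Set.mem_setOf_eq, Set.mem_insert_iff, Set.mem_singleton_iff]
    constructor
    · intro hy
      by_cases h0 : y = 0
      · exact Or.inl h0
      · right
        by_contra hne
        have hyc : y ^ 3 + (a + 1) * y + (a + 1) = 0 := by
          have hf : y * (y ^ 3 + (a + 1) * y + (a + 1)) = 0 := by linear_combination hy
          rcases mul_eq_zero.mp hf with h | h
          · exact absurd h h0
          · exact h
        exact huniq y y₀ h0 hy₀ne hne hyc hcube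
    · rintro (rfl | rfl)
      · ring
      · linear_combination y₀ * hcube
  rw [hset]
  exact Set.ncard_pair (Ne.symm hy₀ne)
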